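/- Let k ∈ {0,…,n} and consider the flex-EA with lower-bound vector l satisfying l_1 > 0, optimizing the trimmed OneMax function TOM_k. Then the expected runtime is at most 1 + 2·l_1^{−1}·n·H_n, where H_n = ∑_{j=1}^n 1/j is the n-th harmonic number; in particular it is O(l_1^{−1}·n·log n). -/

import Mathlib

open scoped ENNReal Classical

namespace FlexEA

/-- Bit strings of length `n`. -/
abbrev Point (n : ℕ) := Fin n → Bool

/-- Flip the bits of `x` at the positions in `S`. -/
def flipSet {n : ℕ} (x : Point n) (S : Finset (Fin n)) : Point n :=
  fun j => if j ∈ S then !(x j) else x j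

/-- Flip exactly `r` positions of `x`, chosen uniformly at random
(junk value: no flip, if `r > n`). -/
noncomputable def flipPMF (n r : ℕ) (x : Point n) : PMF (Point n) :=
  if h : ((Finset.univ : Finset (Fin n)).powersetCard r).Nonempty then
    (PMF.uniformOfFinset _ h).map (flipSet x)
  else PMF.pure x

/-- The PMF given by real weights `w` supported on `s`
(junk value if the weights do not form a probability vector on `s`). -/
noncomputable def pmfOfWeights {α : Type} [Inhabited α] (w : α → ℝ) (s : Finset α) : PMF α :=
  if h : (∑ a ∈ s, ENNReal.ofReal (w a)) = 1 ∧ ∀ a ∉ s, ENNReal.ofReal (w a) = 0 then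
    PMF.ofFinset (fun a => ENNReal.ofReal (w a)) s h.1 h.2
  else PMF.pure default

/-- The water-filling level `c` used to distribute the remaining probability mass
as evenly as possible over the archive `A`, respecting the lower bounds `l`. -/
noncomputable def waterLevel (n : ℕ) (l : ℕ → ℝ) (A : Finset ℕ) : ℝ :=
  sInf {c : ℝ | 0 ≤ c ∧ (∑ i ∈ Finset.Icc 1 n, if i ∈ A then max (l i) c else l i) = 1}

/-- The frequency vector of the flex-EA: `p i = l i` for inactive rates, and the
remaining mass is distributed as evenly as possible over the active rates in `A`,
subject to `p i ≥ l i`. -/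
noncomputable def freq (n : ℕ) (l : ℕ → ℝ) (A : Finset ℕ) (i : ℕ) : ℝ :=
  if i ∈ Finset.Icc 1 n then (if i ∈ A then max (l i) (waterLevel n l A) else l i) else 0

/-- Sampling a rate `r ∈ {1, …, n}` according to the frequency vector. -/
noncomputable def ratePMF (n : ℕ) (l : ℕ → ℝ) (A : Finset ℕ) : PMF ℕ :=
  pmfOfWeights (freq n l A) (Finset.Icc 1 n)

/-- A state of the flex-EA: current solution `x`, archive `arch` of active rates,
failure counters `cnt`, and global counter `glob`. -/
structure State (n : ℕ) where
  x : Point n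
  arch : Finset ℕ
  cnt : ℕ → ℕ
  glob : ℕ

/-- The deterministic update of the flex-EA state after sampling rate `r`
and offspring `y`, when maximizing `f`. -/
noncomputable def updateState (n : ℕ) (f : Point n → ℝ) (l τ : ℕ → ℝ)
    (s : State n) (r : ℕ) (y : Point n) : State n :=
  if f s.x < f y then
    ⟨y, s.arch ∪ {r}, Function.update s.cnt r 0, 0⟩
  else
    let x' := if f y = f s.x then y else s.x
    let u' := s.glob + 1
    let c' := Function.update s.cnt r (s.cnt r + 1)
    let m := if h : s.arch.Nonempty then s.arch.min' h else 1
    if τ m / freq n l s.arch m ≤ (u' : ℝ) then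
      ⟨x', {1}, Function.update c' 1 0, 0⟩
    else if τ r ≤ (c' r : ℝ) then
      if s.arch.erase r = ∅ then
        ⟨x', {if r + 1 ≤ n then r + 1 else 1},
          Function.update c' (if r + 1 ≤ n then r + 1 else 1) 0, u'⟩
      else ⟨x', s.arch.erase r, c', u'⟩
    else ⟨x', s.arch, c', u'⟩

/-- One iteration of the flex-EA maximizing `f`, with lower-bound vector `l`
and count-bound vector `τ`. -/
noncomputable def step (n : ℕ) (f : Point n → ℝ) (l τ : ℕ → ℝ) (s : State n) :
    PMF (State n) :=
  (ratePMF n l s.arch).bind fun r =>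
    (flipPMF n r s.x).map fun y => updateState n f l τ s r y

/-- `x` is a global optimum (maximum) of `f`. -/
def isOpt (n : ℕ) (f : Point n → ℝ) (x : Point n) : Prop := ∀ y, f y ≤ f x

/-- The flex-EA step, made absorbing in the optimal states (used to express
the hitting time via marginal distributions). -/
noncomputable def stepAbs (n : ℕ) (f : Point n → ℝ) (l τ : ℕ → ℝ) (s : State n) :
    PMF (State n) :=
  if isOpt n f s.x then PMF.pure s else step n f l τ s

/-- Initial state: uniformly random solution, archive `{1}`, all counters `0`. -/
noncomputable def initPMF (n : ℕ) : PMF (State n) :=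
  (PMF.uniformOfFintype (Point n)).map fun x => ⟨x, {1}, fun _ => 0, 0⟩

/-- Distribution of the (absorbed) flex-EA state after `t` iterations. -/
noncomputable def stateAt (n : ℕ) (f : Point n → ℝ) (l τ : ℕ → ℝ) : ℕ → PMF (State n)
  | 0 => initPMF n
  | t + 1 => (stateAt n f l τ t).bind (stepAbs n f l τ)

/-- Expected runtime (number of `f`-evaluations until an optimum of `f` is first
evaluated) of the flex-EA on `f`:  `E[1 + T] = 1 + ∑_{t ≥ 0} Pr[T > t]` where `T`
is the hitting time of the optimal states. -/
noncomputable def expectedRuntime (n : ℕ) (f : Point n → ℝ) (l τ : ℕ → ℝ) : ℝ≥0∞ :=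
  1 + ∑' t : ℕ, (stateAt n f l τ t).toOuterMeasure {s | ¬ isOpt n f s.x}

/-- Number of one-bits of `x`. -/
def oneBits {n : ℕ} (x : Point n) : ℕ := (Finset.univ.filter fun i => x i = true).card
/-- Trimmed OneMax: `TOM k x = k + |x|₁` if `|x|₁ ≤ n − k`, and `n − |x|₁` otherwise. -/
noncomputable def TOM (n k : ℕ) (x : Point n) : ℝ :=
  if oneBits x ≤ n - k then (k : ℝ) + oneBits x else (n : ℝ) - oneBits x

/-! ### Auxiliary: levels -/

/-- The integer fitness level of `x` under `TOM n k`. -/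
def lvl (n k : ℕ) (x : Point n) : ℕ :=
  if oneBits x ≤ n - k then k + oneBits x else n - oneBits x

lemma oneBits_le {n : ℕ} (x : Point n) : oneBits x ≤ n := by
  classical
  simpa [oneBits] using (Finset.card_filter_le Finset.univ fun i => x i = true)

lemma TOM_eq_lvl (n k : ℕ) (hk : k ≤ n) (x : Point n) : TOM n k x = (lvl n k x : ℝ) := by
  have hx := oneBits_le x
  unfold TOM lvl
  split_ifs with h
  · push_cast; ring
  · push_cast [Nat.cast_sub hx]; ring

lemma lvl_le (n k : ℕ) (hk : k ≤ n) (x : Point n) : lvl n k x ≤ n := by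
  have hx := oneBits_le x
  unfold lvl
  split_ifs with h
  · omega
  · omega

lemma lvl_eq_n_iff (n k : ℕ) (hk : k ≤ n) (x : Point n) :
    lvl n k x = n ↔ oneBits x = n - k := by
  have hx := oneBits_le x
  unfold lvl
  split_ifs with h
  · omega
  · omega

/-- A point with exactly `n - k` one-bits. -/
lemma exists_opt_point (n k : ℕ) (hk : k ≤ n) :
    ∃ y : Point n, oneBits y = n - k := by
  classical
  refine ⟨fun i => decide ((i : ℕ) < n - k), ?_⟩
  unfold oneBits
  have : (Finset.univ.filter fun i : Fin n => (decide ((i : ℕ) < n - k)) = true)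
      = Finset.univ.filter fun i : Fin n => (i : ℕ) < n - k := by
    apply Finset.filter_congr; intro i _; simp
  rw [this]
  rcases Nat.eq_zero_or_pos k with hk0 | hk0
  · subst hk0
    have : (Finset.univ.filter fun i : Fin n => (i : ℕ) < n - 0) = Finset.univ := by
      apply Finset.filter_true_of_mem; intro i _; simpa using i.isLt
    simp [this]
  · have hlt : n - k < n := by omega
    have : (Finset.univ.filter fun i : Fin n => (i : ℕ) < n - k)
        = Finset.Iio (⟨n - k, hlt⟩ : Fin n) := by
      ext i; simp [Finset.mem_Iio, Fin.lt_def]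
    rw [this, Fin.card_Iio]
lemma isOpt_iff (n k : ℕ) (hk : k ≤ n) (x : Point n) :
    isOpt n (TOM n k) x ↔ lvl n k x = n := by
  constructor
  · intro h
    obtain ⟨y, hy⟩ := exists_opt_point n k hk
    have hyl : lvl n k y = n := (lvl_eq_n_iff n k hk y).2 hy
    have := h y
    rw [TOM_eq_lvl n k hk, TOM_eq_lvl n k hk, hyl] at this
    have h1 : (n : ℝ) ≤ (lvl n k x : ℝ) := this
    have h2 : n ≤ lvl n k x := by exact_mod_cast h1
    exact le_antisymm (lvl_le n k hk x) h2
  · intro h y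
    rw [TOM_eq_lvl n k hk, TOM_eq_lvl n k hk, h]
    exact_mod_cast lvl_le n k hk y

lemma oneBits_flip_false {n : ℕ} (x : Point n) (i : Fin n) (hi : x i = false) :
    oneBits (flipSet x {i}) = oneBits x + 1 := by
  classical
  unfold oneBits flipSet
  have : (Finset.univ.filter fun j => (if j ∈ ({i} : Finset (Fin n)) then !(x j) else x j) = true)
      = insert i (Finset.univ.filter fun j => x j = true) := by
    ext j
    by_cases hj : j = i <;> simp [hj, hi]
  rw [this, Finset.card_insert_of_notMem (by simp [hi])]

lemma oneBits_flip_true {n : ℕ} (x : Point n) (i : Fin n) (hi : x i = true) :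
    oneBits (flipSet x {i}) + 1 = oneBits x := by
  classical
  unfold oneBits flipSet
  have : (Finset.univ.filter fun j => (if j ∈ ({i} : Finset (Fin n)) then !(x j) else x j) = true)
      = (Finset.univ.filter fun j => x j = true).erase i := by
    ext j
    by_cases hj : j = i <;> simp [hj, hi]
  rw [this, Finset.card_erase_add_one (by simp [hi])]
/-- The set of positions whose single flip strictly improves `TOM n k`. -/
noncomputable def impSet (n k : ℕ) (x : Point n) : Finset (Fin n) :=
  if oneBits x ≤ n - k then Finset.univ.filter (fun i => x i = false)
  else Finset.univ.filter (fun i => x i = true)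

lemma card_impSet (n k : ℕ) (hk : k ≤ n) (x : Point n) (h : lvl n k x < n) :
    n - lvl n k x ≤ (impSet n k x).card := by
  classical
  have hx := oneBits_le x
  have hcompl : (Finset.univ.filter fun i : Fin n => x i = false).card
      = n - oneBits x := by
    have := Finset.card_filter_add_card_filter_not
      (s := (Finset.univ : Finset (Fin n))) (p := fun i => x i = true)
    have h2 : (Finset.univ.filter fun i : Fin n => ¬ x i = true)
        = Finset.univ.filter fun i : Fin n => x i = false := by
      apply Finset.filter_congr; intro i _; simp
    rw [h2] at this
    have hcard : (Finset.univ : Finset (Fin n)).card = n := by simp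
    unfold oneBits
    omega
  unfold impSet lvl at *
  split_ifs with hc
  · rw [hcompl]; rw [if_pos hc] at h; omega
  · have : (Finset.univ.filter fun i : Fin n => x i = true).card = oneBits x := rfl
    rw [this]; rw [if_neg hc] at h; omega

lemma lvl_flip_imp (n k : ℕ) (hk : k ≤ n) (x : Point n) (h : lvl n k x < n)
    {i : Fin n} (hi : i ∈ impSet n k x) :
    lvl n k x < lvl n k (flipSet x {i}) := by
  classical
  have hx := oneBits_le x
  unfold impSet at hi
  unfold lvl at *
  split_ifs at hi with hc
  · have hif : x i = false := by simpa using hi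
    have hy := oneBits_flip_false x i hif
    rw [if_pos hc] at h ⊢
    split_ifs with h2 <;> omega
  · have hit : x i = true := by simpa using hi
    have hy := oneBits_flip_true x i hit
    rw [if_neg hc] at h ⊢
    split_ifs with h2 <;> omega
/-! ### Properness of the frequency vector -/

section Freq
variable {n : ℕ} {l : ℕ → ℝ}

lemma waterLevel_mem (hn : 1 ≤ n) (hl0 : ∀ i, 0 ≤ l i)
    (hlsum : ∑ i ∈ Finset.Icc 1 n, l i ≤ 1) {A : Finset ℕ}
    (hA : A.Nonempty) (hA2 : A ⊆ Finset.Icc 1 n) :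
    0 ≤ waterLevel n l A ∧
      (∑ i ∈ Finset.Icc 1 n, if i ∈ A then max (l i) (waterLevel n l A) else l i) = 1 := by
  classical
  set g : ℝ → ℝ := fun c => ∑ i ∈ Finset.Icc 1 n, if i ∈ A then max (l i) c else l i with hg
  have hgc : Continuous g := by
    apply continuous_finset_sum
    intro i _
    by_cases hi : i ∈ A
    · simp only [if_pos hi]
      exact continuous_const.max continuous_id
    · simp only [if_neg hi]
      exact continuous_const
  have hg0 : g 0 ≤ 1 := by
    have : g 0 = ∑ i ∈ Finset.Icc 1 n, l i := by
      apply Finset.sum_congr rfl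
      intro i _
      split_ifs with hi
      · exact max_eq_left (hl0 i)
      · rfl
    rw [this]; exact hlsum
  have hg1 : 1 ≤ g 1 := by
    obtain ⟨i₀, hi₀⟩ := hA
    have h1 : max (l i₀) 1 ≤ g 1 := by
      have := Finset.single_le_sum (f := fun i => if i ∈ A then max (l i) (1:ℝ) else l i)
        (fun i _ => by
                       show (0:ℝ) ≤ if i ∈ A then max (l i) 1 else l i
                       split_ifs with hi
                       · exact le_max_of_le_left (hl0 i)
                       · exact hl0 i) (hA2 hi₀)
      simpa [if_pos hi₀] using this
    exact le_trans (le_max_right _ _) h1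
  obtain ⟨c, hc, hgc1⟩ : ∃ c ∈ Set.Icc (0:ℝ) 1, g c = 1 := by
    have := intermediate_value_Icc (zero_le_one) hgc.continuousOn (a := (0:ℝ)) (b := 1)
    obtain ⟨c, hcm, hceq⟩ := this ⟨hg0, hg1⟩
    exact ⟨c, hcm, hceq⟩
  set S : Set ℝ := {c : ℝ | 0 ≤ c ∧ (∑ i ∈ Finset.Icc 1 n, if i ∈ A then max (l i) c else l i) = 1}
  have hSne : S.Nonempty := ⟨c, hc.1, hgc1⟩
  have hSbdd : BddBelow S := ⟨0, fun y hy => hy.1⟩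
  have hSclosed : IsClosed S := by
    have : S = Set.Ici (0:ℝ) ∩ g ⁻¹' {1} := by
      ext y; simp [S, Set.mem_Ici, g]
    rw [this]
    exact isClosed_Ici.inter (isClosed_singleton.preimage hgc)
  have hmem : sInf S ∈ S := hSclosed.csInf_mem hSne hSbdd
  exact ⟨hmem.1, hmem.2⟩

lemma freq_nonneg {A : Finset ℕ} (hl0 : ∀ i, 0 ≤ l i) (hwl : 0 ≤ waterLevel n l A) (i : ℕ) :
    0 ≤ freq n l A i := by
  unfold freq
  split_ifs with h1 h2
  · exact le_trans hwl (le_max_right _ _)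
  · exact hl0 i
  · exact le_refl 0

lemma ratePMF_apply (hn : 1 ≤ n) (hl0 : ∀ i, 0 ≤ l i)
    (hlsum : ∑ i ∈ Finset.Icc 1 n, l i ≤ 1) {A : Finset ℕ}
    (hA : A.Nonempty) (hA2 : A ⊆ Finset.Icc 1 n) (r : ℕ) :
    ratePMF n l A r = ENNReal.ofReal (freq n l A r) := by
  classical
  obtain ⟨hwl, hsum⟩ := waterLevel_mem hn hl0 hlsum hA hA2
  have h1 : (∑ i ∈ Finset.Icc 1 n, ENNReal.ofReal (freq n l A i)) = 1 := by
    rw [← ENNReal.ofReal_sum_of_nonneg (fun i _ => freq_nonneg hl0 hwl i)]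
    have heq : (∑ i ∈ Finset.Icc 1 n, freq n l A i)
        = ∑ i ∈ Finset.Icc 1 n, if i ∈ A then max (l i) (waterLevel n l A) else l i := by
      apply Finset.sum_congr rfl
      intro i hi
      unfold freq
      rw [if_pos hi]
    rw [heq, hsum, ENNReal.ofReal_one]
  have h2 : ∀ a ∉ Finset.Icc 1 n, ENNReal.ofReal (freq n l A a) = 0 := by
    intro a ha
    unfold freq
    rw [if_neg ha, ENNReal.ofReal_zero]
  unfold ratePMF pmfOfWeights
  rw [dif_pos ⟨h1, h2⟩, PMF.ofFinset_apply]

lemma ratePMF_support (hn : 1 ≤ n) (hl0 : ∀ i, 0 ≤ l i)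
    (hlsum : ∑ i ∈ Finset.Icc 1 n, l i ≤ 1) {A : Finset ℕ}
    (hA : A.Nonempty) (hA2 : A ⊆ Finset.Icc 1 n) {r : ℕ}
    (hr : r ∈ (ratePMF n l A).support) : r ∈ Finset.Icc 1 n := by
  rw [PMF.mem_support_iff, ratePMF_apply hn hl0 hlsum hA hA2 r] at hr
  by_contra hrn
  apply hr
  unfold freq
  rw [if_neg hrn, ENNReal.ofReal_zero]

lemma freq_one_ge (hn : 1 ≤ n) (A : Finset ℕ) : l 1 ≤ freq n l A 1 := by
  unfold freq
  have h1 : 1 ∈ Finset.Icc 1 n := by simp [hn]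
  rw [if_pos h1]
  split_ifs with h2
  · exact le_max_left _ _
  · exact le_refl _

end Freq
/-! ### Invariant and monotonicity -/

/-- Invariant on the archive: nonempty and included in `{1, …, n}`. -/
def Inv (n : ℕ) (s : State n) : Prop :=
  s.arch.Nonempty ∧ s.arch ⊆ Finset.Icc 1 n

lemma updateState_x (n : ℕ) (f : Point n → ℝ) (l τ : ℕ → ℝ)
    (s : State n) (r : ℕ) (y : Point n) :
    f s.x ≤ f (updateState n f l τ s r y).x := by
  unfold updateState
  dsimp only
  split_ifs
  all_goals
    first
      | exact le_of_lt ‹f s.x < f y›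
      | exact le_of_eq (Eq.symm ‹f y = f s.x›)
      | exact le_refl _

lemma updateState_arch (n : ℕ) (f : Point n → ℝ) (l τ : ℕ → ℝ)
    (s : State n) (r : ℕ) (y : Point n) (hn : 1 ≤ n) (hs : Inv n s)
    (hr : r ∈ Finset.Icc 1 n) : Inv n (updateState n f l τ s r y) := by
  obtain ⟨hne, hsub⟩ := hs
  rw [Finset.mem_Icc] at hr
  suffices h : (updateState n f l τ s r y).arch = s.arch ∪ {r} ∨
      (∃ r', (1 ≤ r' ∧ r' ≤ n) ∧ (updateState n f l τ s r y).arch = {r'}) ∨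
      ((updateState n f l τ s r y).arch = s.arch.erase r ∧ (s.arch.erase r).Nonempty) ∨
      (updateState n f l τ s r y).arch = s.arch by
    rcases h with h | ⟨r', hr', h⟩ | ⟨h, hne'⟩ | h
    · refine ⟨?_, ?_⟩
      · rw [h]; exact ⟨r, by simp⟩
      · rw [h]; intro a ha
        rcases Finset.mem_union.1 ha with ha | ha
        · exact hsub ha
        · rw [Finset.mem_singleton.1 ha]; rw [Finset.mem_Icc]; exact hr
    · refine ⟨?_, ?_⟩
      · rw [h]; exact ⟨r', by simp⟩
      · rw [h]; intro a ha
        rw [Finset.mem_singleton.1 ha]; rw [Finset.mem_Icc]; exact hr'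
    · refine ⟨?_, ?_⟩
      · rw [h]; exact hne'
      · rw [h]; exact fun a ha => hsub (Finset.mem_of_mem_erase ha)
    · rw [Inv, h]; exact ⟨hne, hsub⟩
  unfold updateState
  dsimp only
  split_ifs
  all_goals
    first
      | (left; rfl)
      | (right; left; refine ⟨_, ⟨?_, ?_⟩, rfl⟩ <;> omega)
      | (right; right; left; refine ⟨rfl, Finset.nonempty_iff_ne_empty.2 ?_⟩; assumption)
      | (right; right; right; rfl)
section Support
variable {n : ℕ} {f : Point n → ℝ} {l τ : ℕ → ℝ}

lemma step_support (hn : 1 ≤ n) (hl0 : ∀ i, 0 ≤ l i)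
    (hlsum : ∑ i ∈ Finset.Icc 1 n, l i ≤ 1) {s s' : State n} (hs : Inv n s)
    (h : s' ∈ (step n f l τ s).support) : Inv n s' ∧ f s.x ≤ f s'.x := by
  rw [step, PMF.support_bind] at h
  simp only [Set.mem_iUnion] at h
  obtain ⟨r, hr, h⟩ := h
  rw [PMF.support_map] at h
  obtain ⟨y, _, rfl⟩ := h
  have hrIcc : r ∈ Finset.Icc 1 n := ratePMF_support hn hl0 hlsum hs.1 hs.2 hr
  exact ⟨updateState_arch n f l τ s r y hn hs hrIcc, updateState_x n f l τ s r y⟩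

lemma stepAbs_support (hn : 1 ≤ n) (hl0 : ∀ i, 0 ≤ l i)
    (hlsum : ∑ i ∈ Finset.Icc 1 n, l i ≤ 1) {s s' : State n} (hs : Inv n s)
    (h : s' ∈ (stepAbs n f l τ s).support) : Inv n s' ∧ f s.x ≤ f s'.x := by
  rw [stepAbs] at h
  split_ifs at h with hopt
  · rw [PMF.support_pure] at h
    rw [h]
    exact ⟨hs, le_refl _⟩
  · exact step_support hn hl0 hlsum hs h

lemma stateAt_inv (hn : 1 ≤ n) (hl0 : ∀ i, 0 ≤ l i)
    (hlsum : ∑ i ∈ Finset.Icc 1 n, l i ≤ 1) :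
    ∀ t : ℕ, ∀ s ∈ (stateAt n f l τ t).support, Inv n s := by
  intro t
  induction t with
  | zero =>
    intro s hs
    rw [stateAt, initPMF, PMF.support_map] at hs
    obtain ⟨x, _, rfl⟩ := hs
    exact ⟨⟨1, by simp⟩, by intro a ha; rw [Finset.mem_singleton.1 ha]; simp [hn]⟩
  | succ t ih =>
    intro s hs
    rw [stateAt, PMF.support_bind] at hs
    simp only [Set.mem_iUnion] at hs
    obtain ⟨s₀, hs₀, hs⟩ := hs
    exact (stepAbs_support hn hl0 hlsum (ih s₀ hs₀) hs).1

end Support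
section Measure
variable {α : Type*}

lemma toOuterMeasure_add_compl (p : PMF α) (E : Set α) :
    p.toOuterMeasure E + p.toOuterMeasure Eᶜ = 1 := by
  classical
  rw [PMF.toOuterMeasure_apply, PMF.toOuterMeasure_apply, ← ENNReal.tsum_add, ← PMF.tsum_coe p]
  congr 1
  ext x
  by_cases hx : x ∈ E <;> simp [Set.indicator_apply, hx]

lemma toOuterMeasure_eq_zero' (p : PMF α) {E : Set α}
    (h : ∀ a ∈ p.support, a ∉ E) : p.toOuterMeasure E = 0 := by
  classical
  rw [PMF.toOuterMeasure_apply]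
  rw [ENNReal.tsum_eq_zero]
  intro a
  by_cases ha : a ∈ E
  · rw [Set.indicator_of_mem ha]
    by_contra hpa
    exact h a ((PMF.mem_support_iff _ _).2 hpa) ha
  · exact Set.indicator_of_notMem ha _

end Measure

section Escape
variable {n k : ℕ} {l τ : ℕ → ℝ}

lemma step_escape (hn : 1 ≤ n) (hk : k ≤ n) (hl0 : ∀ i, 0 ≤ l i)
    (hlsum : ∑ i ∈ Finset.Icc 1 n, l i ≤ 1) {s : State n} (hs : Inv n s)
    {v : ℕ} (hv : lvl n k s.x = v) (hvn : v < n) :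
    ENNReal.ofReal (l 1) * (((n - v : ℕ) : ℝ≥0∞) * ((n : ℝ≥0∞))⁻¹) ≤
      (step n (TOM n k) l τ s).toOuterMeasure {s' : State n | v < lvl n k s'.x} := by
  classical
  set E : Set (State n) := {s' : State n | v < lvl n k s'.x} with hE
  rw [step, PMF.toOuterMeasure_bind_apply]
  refine le_trans ?_ (ENNReal.le_tsum 1)
  have hrate : ENNReal.ofReal (l 1) ≤ ratePMF n l s.arch 1 := by
    rw [ratePMF_apply hn hl0 hlsum hs.1 hs.2 1]
    exact ENNReal.ofReal_le_ofReal (freq_one_ge hn s.arch)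
  refine mul_le_mul' hrate ?_
  -- the flip part
  have hpow : ((Finset.univ : Finset (Fin n)).powersetCard 1).Nonempty := by
    rw [Finset.powersetCard_nonempty]
    simpa using hn
  rw [PMF.toOuterMeasure_map_apply, flipPMF, dif_pos hpow, PMF.toOuterMeasure_map_apply,
    PMF.toOuterMeasure_apply]
  set F : Set (Finset (Fin n)) :=
    flipSet s.x ⁻¹' (updateState n (TOM n k) l τ s 1 ⁻¹' E) with hF
  set G : Finset (Finset (Fin n)) :=
    (impSet n k s.x).image (fun i => ({i} : Finset (Fin n))) with hG
  have hGcard : G.card = (impSet n k s.x).card :=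
    Finset.card_image_of_injective _ Finset.singleton_injective
  have hterm : ∀ S ∈ G, F.indicator (⇑(PMF.uniformOfFinset _ hpow)) S = ((n : ℝ≥0∞))⁻¹ := by
    intro S hS
    obtain ⟨i, hi, rfl⟩ := Finset.mem_image.1 hS
    have hlvlx : lvl n k s.x < n := by rw [hv]; exact hvn
    have himp := lvl_flip_imp n k hk s.x hlvlx hi
    have hSF : ({i} : Finset (Fin n)) ∈ F := by
      rw [hF]
      simp only [Set.mem_preimage]
      set y := flipSet s.x {i}
      have hTOM : TOM n k s.x < TOM n k y := by
        rw [TOM_eq_lvl n k hk, TOM_eq_lvl n k hk]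
        exact_mod_cast himp
      show updateState n (TOM n k) l τ s 1 y ∈ E
      unfold updateState
      rw [if_pos hTOM]
      show v < lvl n k y
      rw [← hv]
      exact himp
    rw [Set.indicator_of_mem hSF, PMF.uniformOfFinset_apply]
    have hmem : ({i} : Finset (Fin n)) ∈ (Finset.univ : Finset (Fin n)).powersetCard 1 := by
      rw [Finset.mem_powersetCard]
      exact ⟨Finset.subset_univ _, Finset.card_singleton i⟩
    rw [if_pos hmem, Finset.card_powersetCard, Finset.card_univ, Fintype.card_fin,
      Nat.choose_one_right]
  calc ((n - v : ℕ) : ℝ≥0∞) * ((n : ℝ≥0∞))⁻¹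
      ≤ ((impSet n k s.x).card : ℝ≥0∞) * ((n : ℝ≥0∞))⁻¹ := by
        refine mul_le_mul_left ?_ _
        have hcard := card_impSet n k hk s.x (by rw [hv]; exact hvn)
        rw [hv] at hcard
        exact Nat.cast_le.2 hcard
    _ = ∑ S ∈ G, F.indicator (⇑(PMF.uniformOfFinset _ hpow)) S := by
        rw [Finset.sum_congr rfl hterm, Finset.sum_const, hGcard, nsmul_eq_mul]
    _ ≤ ∑' S, F.indicator (⇑(PMF.uniformOfFinset _ hpow)) S := ENNReal.sum_le_tsum G

end Escape
lemma toOuterMeasure_le_one {α : Type*} (p : PMF α) (E : Set α) :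
    p.toOuterMeasure E ≤ 1 := by
  rw [← toOuterMeasure_add_compl p E]
  exact le_self_add

/-- The per-level escape probability lower bound. -/
noncomputable def esc (n : ℕ) (l : ℕ → ℝ) (v : ℕ) : ℝ≥0∞ :=
  ENNReal.ofReal (l 1) * (((n - v : ℕ) : ℝ≥0∞) * ((n : ℝ≥0∞))⁻¹)

section Star
variable {n k : ℕ} {l τ : ℕ → ℝ}

lemma star_step (hn : 1 ≤ n) (hk : k ≤ n) (hl0 : ∀ i, 0 ≤ l i)
    (hlsum : ∑ i ∈ Finset.Icc 1 n, l i ≤ 1) (μ : PMF (State n))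
    (hsup : ∀ s ∈ μ.support, Inv n s) {v : ℕ} (hvn : v < n) :
    (μ.bind (stepAbs n (TOM n k) l τ)).toOuterMeasure {s : State n | lvl n k s.x ≤ v}
        + esc n l v * μ.toOuterMeasure {s : State n | lvl n k s.x = v}
      ≤ μ.toOuterMeasure {s : State n | lvl n k s.x ≤ v} := by
  classical
  set L : Set (State n) := {s : State n | lvl n k s.x ≤ v} with hL
  set V : Set (State n) := {s : State n | lvl n k s.x = v} with hV
  rw [PMF.toOuterMeasure_bind_apply, PMF.toOuterMeasure_apply μ V,
    ← ENNReal.tsum_mul_left, ← ENNReal.tsum_add, PMF.toOuterMeasure_apply μ L]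
  refine ENNReal.tsum_le_tsum fun s => ?_
  by_cases hμ : μ s = 0
  · simp only [hμ, Set.indicator_apply]
    split_ifs <;> simp
  have hInv := hsup s ((PMF.mem_support_iff _ _).2 hμ)
  rcases lt_trichotomy (lvl n k s.x) v with h3 | h2 | h1
  · -- below level v
    have hsL : s ∈ L := le_of_lt h3
    have hsV : s ∉ V := by simp only [hV, Set.mem_setOf_eq]; omega
    rw [Set.indicator_of_mem hsL, Set.indicator_of_notMem hsV, mul_zero, add_zero]
    calc μ s * (stepAbs n (TOM n k) l τ s).toOuterMeasure L
        ≤ μ s * 1 := mul_le_mul_right (toOuterMeasure_le_one _ _) _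
      _ = μ s := mul_one _
  · -- exactly at level v
    have hsL : s ∈ L := le_of_eq h2
    have hsV : s ∈ V := h2
    rw [Set.indicator_of_mem hsL, Set.indicator_of_mem hsV]
    have hnopt : ¬ isOpt n (TOM n k) s.x := by
      rw [isOpt_iff n k hk]
      omega
    have hstep : stepAbs n (TOM n k) l τ s = step n (TOM n k) l τ s := by
      rw [stepAbs, if_neg hnopt]
    have hesc : esc n l v ≤ (step n (TOM n k) l τ s).toOuterMeasure Lᶜ := by
      have hcompl : Lᶜ = {s' : State n | v < lvl n k s'.x} := by
        ext s'; simp only [hL, Set.mem_compl_iff, Set.mem_setOf_eq, not_le]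
      rw [hcompl]
      exact step_escape hn hk hl0 hlsum hInv h2 hvn
    have hM : (stepAbs n (TOM n k) l τ s).toOuterMeasure L + esc n l v ≤ 1 := by
      rw [hstep]
      calc (step n (TOM n k) l τ s).toOuterMeasure L + esc n l v
          ≤ (step n (TOM n k) l τ s).toOuterMeasure L
              + (step n (TOM n k) l τ s).toOuterMeasure Lᶜ := add_le_add_right hesc _
        _ = 1 := toOuterMeasure_add_compl _ _
    calc μ s * (stepAbs n (TOM n k) l τ s).toOuterMeasure L + esc n l v * μ s
        = μ s * ((stepAbs n (TOM n k) l τ s).toOuterMeasure L + esc n l v) := by ring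
      _ ≤ μ s * 1 := mul_le_mul_right hM _
      _ = μ s := mul_one _
  · -- above level v
    have hsL : s ∉ L := by simp only [hL, Set.mem_setOf_eq]; omega
    have hsV : s ∉ V := by simp only [hV, Set.mem_setOf_eq]; omega
    rw [Set.indicator_of_notMem hsL, Set.indicator_of_notMem hsV, mul_zero, add_zero]
    have hzero : (stepAbs n (TOM n k) l τ s).toOuterMeasure L = 0 := by
      apply toOuterMeasure_eq_zero'
      intro a ha
      have hmono := (stepAbs_support hn hl0 hlsum hInv ha).2
      rw [TOM_eq_lvl n k hk, TOM_eq_lvl n k hk] at hmono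
      have : lvl n k s.x ≤ lvl n k a.x := by exact_mod_cast hmono
      simp only [hL, Set.mem_setOf_eq]
      omega
    rw [hzero, mul_zero]

end Star
section Final
variable {n k : ℕ} {l τ : ℕ → ℝ}

lemma telescope (hn : 1 ≤ n) (hk : k ≤ n) (hl0 : ∀ i, 0 ≤ l i)
    (hlsum : ∑ i ∈ Finset.Icc 1 n, l i ≤ 1) {v : ℕ} (hvn : v < n) (T : ℕ) :
    (∑ t ∈ Finset.range T, esc n l v *
        (stateAt n (TOM n k) l τ t).toOuterMeasure {s : State n | lvl n k s.x = v})
      + (stateAt n (TOM n k) l τ T).toOuterMeasure {s : State n | lvl n k s.x ≤ v} ≤ 1 := by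
  induction T with
  | zero =>
    rw [Finset.sum_range_zero, zero_add]
    exact toOuterMeasure_le_one _ _
  | succ T ih =>
    have hstar := star_step (τ := τ) hn hk hl0 hlsum (stateAt n (TOM n k) l τ T)
      (stateAt_inv hn hl0 hlsum T) hvn
    have h1 : (stateAt n (TOM n k) l τ (T + 1)).toOuterMeasure
          {s : State n | lvl n k s.x ≤ v}
        + esc n l v * (stateAt n (TOM n k) l τ T).toOuterMeasure
            {s : State n | lvl n k s.x = v}
        ≤ (stateAt n (TOM n k) l τ T).toOuterMeasure {s : State n | lvl n k s.x ≤ v} := by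
      rw [stateAt]
      exact hstar
    rw [Finset.sum_range_succ]
    calc (∑ t ∈ Finset.range T, esc n l v *
            (stateAt n (TOM n k) l τ t).toOuterMeasure {s : State n | lvl n k s.x = v})
          + esc n l v * (stateAt n (TOM n k) l τ T).toOuterMeasure
              {s : State n | lvl n k s.x = v}
          + (stateAt n (TOM n k) l τ (T + 1)).toOuterMeasure
              {s : State n | lvl n k s.x ≤ v}
        = (∑ t ∈ Finset.range T, esc n l v *
            (stateAt n (TOM n k) l τ t).toOuterMeasure {s : State n | lvl n k s.x = v})
          + ((stateAt n (TOM n k) l τ (T + 1)).toOuterMeasure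
              {s : State n | lvl n k s.x ≤ v}
            + esc n l v * (stateAt n (TOM n k) l τ T).toOuterMeasure
              {s : State n | lvl n k s.x = v}) := by ring
      _ ≤ (∑ t ∈ Finset.range T, esc n l v *
            (stateAt n (TOM n k) l τ t).toOuterMeasure {s : State n | lvl n k s.x = v})
          + (stateAt n (TOM n k) l τ T).toOuterMeasure {s : State n | lvl n k s.x ≤ v} :=
          add_le_add_right h1 _
      _ ≤ 1 := ih

lemma level_sum_le (hn : 1 ≤ n) (hk : k ≤ n) (hl0 : ∀ i, 0 ≤ l i)
    (hlsum : ∑ i ∈ Finset.Icc 1 n, l i ≤ 1) (hl1 : 0 < l 1)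
    {v : ℕ} (hvn : v < n) (T : ℕ) :
    ∑ t ∈ Finset.range T,
        (stateAt n (TOM n k) l τ t).toOuterMeasure {s : State n | lvl n k s.x = v}
      ≤ ENNReal.ofReal ((l 1)⁻¹ * (n : ℝ) / ((n - v : ℕ) : ℝ)) := by
  have hT := telescope (τ := τ) hn hk hl0 hlsum hvn T
  have hEsc : esc n l v * (∑ t ∈ Finset.range T,
      (stateAt n (TOM n k) l τ t).toOuterMeasure {s : State n | lvl n k s.x = v}) ≤ 1 := by
    rw [Finset.mul_sum]
    exact le_trans le_self_add hT
  set X := ∑ t ∈ Finset.range T,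
      (stateAt n (TOM n k) l τ t).toOuterMeasure {s : State n | lvl n k s.x = v} with hX
  set cval := ENNReal.ofReal ((l 1)⁻¹ * (n : ℝ) / ((n - v : ℕ) : ℝ)) with hcval
  have hnv0 : (0:ℝ) < ((n - v : ℕ) : ℝ) := by
    have : 0 < n - v := by omega
    exact_mod_cast this
  have hcancel : cval * esc n l v = 1 := by
    rw [hcval, esc]
    rw [← mul_assoc, ← ENNReal.ofReal_mul (by positivity)]
    have h1 : (l 1)⁻¹ * (n : ℝ) / ((n - v : ℕ) : ℝ) * l 1 = (n : ℝ) / ((n - v : ℕ) : ℝ) := by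
      field_simp
    rw [h1, ENNReal.ofReal_div_of_pos hnv0, ENNReal.ofReal_natCast, ENNReal.ofReal_natCast]
    have ha0 : ((n : ℝ≥0∞)) ≠ 0 := by exact_mod_cast (by omega : n ≠ 0)
    have hat : ((n : ℝ≥0∞)) ≠ ⊤ := ENNReal.natCast_ne_top n
    have hb0 : (((n - v : ℕ) : ℝ≥0∞)) ≠ 0 := by
      have : 0 < n - v := by omega
      exact_mod_cast this.ne'
    have hbt : (((n - v : ℕ) : ℝ≥0∞)) ≠ ⊤ := ENNReal.natCast_ne_top _
    rw [div_eq_mul_inv]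
    calc (n : ℝ≥0∞) * (((n - v : ℕ) : ℝ≥0∞))⁻¹ * (((n - v : ℕ) : ℝ≥0∞) * ((n : ℝ≥0∞))⁻¹)
        = ((n : ℝ≥0∞) * ((n : ℝ≥0∞))⁻¹) * ((((n - v : ℕ) : ℝ≥0∞))⁻¹ * ((n - v : ℕ) : ℝ≥0∞)) := by
          ring
      _ = 1 * 1 := by rw [ENNReal.mul_inv_cancel ha0 hat, ENNReal.inv_mul_cancel hb0 hbt]
      _ = 1 := one_mul 1
  calc X = cval * (esc n l v * X) := by rw [← mul_assoc, hcancel, one_mul]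
    _ ≤ cval * 1 := mul_le_mul_right hEsc _
    _ = cval := mul_one _

lemma notopt_le_sum (hk : k ≤ n) (μ : PMF (State n)) :
    μ.toOuterMeasure {s : State n | ¬ isOpt n (TOM n k) s.x}
      ≤ ∑ v ∈ Finset.range n, μ.toOuterMeasure {s : State n | lvl n k s.x = v} := by
  classical
  simp only [PMF.toOuterMeasure_apply]
  rw [← Summable.tsum_finsetSum (fun i _ => ENNReal.summable)]
  refine ENNReal.tsum_le_tsum fun s => ?_
  by_cases hs : isOpt n (TOM n k) s.x
  · rw [Set.indicator_of_notMem (by simp [hs])]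
    exact zero_le
  · have hlv : lvl n k s.x < n :=
      lt_of_le_of_ne (lvl_le n k hk s.x) (fun h => hs ((isOpt_iff n k hk s.x).2 h))
    rw [Set.indicator_of_mem (by simp [hs])]
    have hmem : lvl n k s.x ∈ Finset.range n := Finset.mem_range.2 hlv
    have := Finset.single_le_sum
      (f := fun v => ({s' : State n | lvl n k s'.x = v}).indicator (⇑μ) s)
      (fun v _ => zero_le) hmem
    refine le_trans ?_ this
    show μ s ≤ ({s' : State n | lvl n k s'.x = lvl n k s.x}).indicator (⇑μ) s
    rw [Set.indicator_of_mem (by simp)]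

end Final
/-- The flex-EA with `l 1 > 0` optimizes trimmed OneMax in expected
time at most `1 + 2 l₁⁻¹ n H_n`, where `H_n` is the `n`-th harmonic number. -/
theorem flexEA_trimmedOneMax (n k : ℕ) (hn : 1 ≤ n) (hk : k ≤ n)
    (l τ : ℕ → ℝ) (hl0 : ∀ i, 0 ≤ l i) (hlsum : ∑ i ∈ Finset.Icc 1 n, l i ≤ 1)
    (hτ0 : ∀ i, 0 ≤ τ i) (hl1 : 0 < l 1) :
    expectedRuntime n (TOM n k) l τ ≤
      ENNReal.ofReal (1 + 2 * (l 1)⁻¹ * n * ∑ j ∈ Finset.Icc 1 n, (j : ℝ)⁻¹) := by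
  classical
  set H : ℝ := ∑ j ∈ Finset.Icc 1 n, (j : ℝ)⁻¹ with hH
  have hH0 : 0 ≤ H := Finset.sum_nonneg fun j _ => by positivity
  have hreindex : (∑ v ∈ Finset.range n, (l 1)⁻¹ * (n : ℝ) / ((n - v : ℕ) : ℝ))
      = (l 1)⁻¹ * (n : ℝ) * H := by
    rw [hH, Finset.mul_sum]
    refine Finset.sum_bij' (i := fun v _ => n - v) (j := fun j _ => n - j)
      ?_ ?_ ?_ ?_ ?_
    · intro v hv
      rw [Finset.mem_range] at hv
      show n - v ∈ Finset.Icc 1 n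
      rw [Finset.mem_Icc]
      omega
    · intro j hj
      rw [Finset.mem_Icc] at hj
      show n - j ∈ Finset.range n
      rw [Finset.mem_range]
      omega
    · intro v hv
      rw [Finset.mem_range] at hv
      show n - (n - v) = v
      omega
    · intro j hj
      rw [Finset.mem_Icc] at hj
      show n - (n - j) = j
      omega
    · intro v hv
      rw [div_eq_mul_inv]
  -- the tail-sum bound
  have htsum : (∑' t : ℕ, (stateAt n (TOM n k) l τ t).toOuterMeasure
        {s : State n | ¬ isOpt n (TOM n k) s.x})
      ≤ ENNReal.ofReal ((l 1)⁻¹ * (n : ℝ) * H) := by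
    rw [ENNReal.tsum_eq_iSup_sum]
    refine iSup_le fun sT => ?_
    obtain ⟨T, hsT⟩ := Finset.exists_nat_subset_range sT
    calc (∑ t ∈ sT, (stateAt n (TOM n k) l τ t).toOuterMeasure
            {s : State n | ¬ isOpt n (TOM n k) s.x})
        ≤ ∑ t ∈ Finset.range T, (stateAt n (TOM n k) l τ t).toOuterMeasure
            {s : State n | ¬ isOpt n (TOM n k) s.x} :=
          Finset.sum_le_sum_of_subset hsT
      _ ≤ ∑ t ∈ Finset.range T, ∑ v ∈ Finset.range n,
            (stateAt n (TOM n k) l τ t).toOuterMeasure {s : State n | lvl n k s.x = v} :=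
          Finset.sum_le_sum fun t _ => notopt_le_sum hk _
      _ = ∑ v ∈ Finset.range n, ∑ t ∈ Finset.range T,
            (stateAt n (TOM n k) l τ t).toOuterMeasure {s : State n | lvl n k s.x = v} :=
          Finset.sum_comm
      _ ≤ ∑ v ∈ Finset.range n,
            ENNReal.ofReal ((l 1)⁻¹ * (n : ℝ) / ((n - v : ℕ) : ℝ)) :=
          Finset.sum_le_sum fun v hv =>
            level_sum_le hn hk hl0 hlsum hl1 (Finset.mem_range.1 hv) T
      _ = ENNReal.ofReal (∑ v ∈ Finset.range n, (l 1)⁻¹ * (n : ℝ) / ((n - v : ℕ) : ℝ)) := by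
          rw [ENNReal.ofReal_sum_of_nonneg]
          intro v hv
          rw [Finset.mem_range] at hv
          have : (0:ℝ) < ((n - v : ℕ) : ℝ) := by
            have : 0 < n - v := by omega
            exact_mod_cast this
          positivity
      _ = ENNReal.ofReal ((l 1)⁻¹ * (n : ℝ) * H) := by rw [hreindex]
  rw [expectedRuntime]
  have hfinal : (1 : ℝ≥0∞) + ENNReal.ofReal ((l 1)⁻¹ * (n : ℝ) * H)
      ≤ ENNReal.ofReal (1 + 2 * (l 1)⁻¹ * n * H) := by
    rw [ENNReal.ofReal_add (by norm_num) (by positivity), ENNReal.ofReal_one]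
    refine add_le_add_right (ENNReal.ofReal_le_ofReal ?_) 1
    nlinarith [mul_nonneg (mul_nonneg (inv_nonneg.2 (le_of_lt hl1)) (Nat.cast_nonneg n)) hH0]
  exact le_trans (add_le_add_right htsum 1) hfinal

end FlexEA
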